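/- Let 1 ≤ p < ∞ and r > 0. There exists a constant C > 0 such that for every sequence (a_n)_{n≥1} of nonnegative reals, ( Σ_{n=1}^∞ ( Σ_{j=1}^n a_j )^p n^{-r-1} )^{1/p} ≤ C ( Σ_{n=1}^∞ (n a_n)^p n^{-r-1} )^{1/p}. -/

import Mathlib

open scoped ENNReal NNReal

lemma auxA {δ x : ℝ} (hδ0 : 0 < δ) (hδ1 : δ ≤ 1) (hx : 1 ≤ x) :
    δ * x ^ (δ - 1) ≤ x ^ δ - (x - 1) ^ δ := by
  have hx0 : 0 < x := lt_of_lt_of_le one_pos hx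
  have hxx : x * (1 + (-1/x)) = x - 1 := by field_simp; ring
  have h1 : (x - 1) ^ δ = x ^ δ * (1 + (-1/x)) ^ δ := by
    rw [← Real.mul_rpow hx0.le (by rw [neg_div]; nlinarith [div_le_one_of_le₀ hx hx0.le]), hxx]
  have hs : -1 ≤ -1/x := by
    rw [neg_div, neg_le_neg_iff]; exact div_le_one_of_le₀ hx hx0.le
  have hb : (1 + (-1/x)) ^ δ ≤ 1 + δ * (-1/x) :=
    rpow_one_add_le_one_add_mul_self hs hδ0.le hδ1
  have h2 : x ^ δ * (1 + δ * (-1/x)) = x ^ δ - δ * x ^ (δ - 1) := by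
    rw [Real.rpow_sub hx0, Real.rpow_one]
    field_simp; ring
  have h3 : x ^ δ * (1 + (-1/x)) ^ δ ≤ x ^ δ - δ * x ^ (δ - 1) := by
    rw [← h2]
    exact mul_le_mul_of_nonneg_left hb (Real.rpow_nonneg hx0.le δ)
  linarith [h1 ▸ h3]

lemma auxB {u x : ℝ} (hu : 1 < u) (hx : 1 ≤ x) :
    (u - 1) * (x + 1) ^ (-u) ≤ x ^ (1 - u) - (x + 1) ^ (1 - u) := by
  have hx0 : 0 < x := lt_of_lt_of_le one_pos hx
  have hx1 : (0:ℝ) < x + 1 := by linarith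
  -- key: (x+1)^u * x^(1-u) ≥ x + u
  have key : x + u ≤ (x + 1) ^ u * x ^ (1 - u) := by
    have hm : (-1:ℝ) ≤ 1/x := by
      have h0 : (0:ℝ) ≤ 1/x := by positivity
      linarith
    have hb : 1 + u * (1/x) ≤ (1 + 1/x) ^ u :=
      one_add_mul_self_le_rpow_one_add hm hu.le
    have h1 : (x + 1) ^ u * x ^ (1 - u) = x * (1 + 1/x) ^ u := by
      have : (1:ℝ) + 1/x = (x+1)/x := by field_simp
      rw [this, Real.div_rpow hx1.le hx0.le, Real.rpow_sub hx0, Real.rpow_one]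
      field_simp
    rw [h1]
    calc x + u = x * (1 + u * (1/x)) := by field_simp
    _ ≤ x * (1 + 1/x) ^ u := mul_le_mul_of_nonneg_left hb hx0.le
  have h2 : (x + 1) ^ (-u) * (x + u) ≤ (x+1)^(-u) * ((x + 1) ^ u * x ^ (1 - u)) :=
    mul_le_mul_of_nonneg_left key (by positivity)
  have h3 : (x+1)^(-u) * ((x + 1) ^ u * x ^ (1 - u)) = x ^ (1-u) := by
    rw [← mul_assoc, ← Real.rpow_add hx1]; simp
  have h4 : (x+1)^(-u) * (x + u) = (u - 1) * (x+1)^(-u) + (x+1)^(1-u) := by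
    have : (x+1)^(1-u) = (x+1)^(-u) * (x+1) := by
      rw [← Real.rpow_add_one hx1.ne']; ring_nf
    rw [this]; ring
  linarith [h4 ▸ (h3 ▸ h2)]


-- telescoping: ∑_{j=1}^N (j^δ - (j-1)^δ) = N^δ
lemma auxD {δ : ℝ} (hδ0 : 0 < δ) (N : ℕ) :
    ∑ j ∈ Finset.Icc 1 N, (((j:ℝ)) ^ δ - ((j:ℝ) - 1) ^ δ) = (N:ℝ) ^ δ := by
  induction N with
  | zero => simp [Real.zero_rpow hδ0.ne']
  | succ N ih =>
    rw [Finset.sum_Icc_succ_top (Nat.one_le_iff_ne_zero.mpr (Nat.succ_ne_zero N)), ih]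
    push_cast; ring

-- tail bound
lemma auxC {u : ℝ} (hu : 1 < u) {j : ℕ} (hj : 1 ≤ j) :
    (∑' n : ℕ, if j ≤ n + 1 then ENNReal.ofReal (((n:ℝ) + 1) ^ (-u)) else 0)
      ≤ ENNReal.ofReal (2 ^ u / (u - 1) * (j:ℝ) ^ (1 - u)) := by
  have hu1 : (0:ℝ) < u - 1 := by linarith
  set K : ℝ := 2 ^ u / (u - 1) with hK
  have h2u : (0:ℝ) < 2 ^ u := Real.rpow_pos_of_pos (by norm_num) u
  have hK0 : 0 ≤ K := le_of_lt (div_pos h2u hu1)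
  set c : ℕ → ℝ := fun n => (max (j:ℝ) ((n:ℝ) + 1)) ^ (1 - u) with hc
  have hcpos : ∀ n : ℕ, (0:ℝ) < max (j:ℝ) ((n:ℝ)+1) := fun n =>
    lt_max_of_lt_right (by positivity)
  have hcanti : ∀ n : ℕ, c (n+1) ≤ c n := by
    intro n
    apply Real.rpow_le_rpow_of_nonpos (hcpos n) ?_ (by linarith)
    apply max_le_max le_rfl
    push_cast; linarith
  have hcnonneg : ∀ n : ℕ, (0:ℝ) ≤ c n := fun n => Real.rpow_nonneg (hcpos n).le _
  have hterm : ∀ n : ℕ, (if j ≤ n + 1 then ENNReal.ofReal (((n:ℝ) + 1) ^ (-u)) else 0)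
      ≤ ENNReal.ofReal (K * (c n - c (n+1))) := by
    intro n
    by_cases h : j ≤ n + 1
    · rw [if_pos h]
      apply ENNReal.ofReal_le_ofReal
      have hjr : (j:ℝ) ≤ (n:ℝ) + 1 := by exact_mod_cast h
      have hcn : c n = ((n:ℝ)+1) ^ (1-u) := by
        simp only [hc]; rw [max_eq_right hjr]
      have e1 : (n:ℝ)+1+1 = (n:ℝ)+2 := by ring
      have hcn1 : c (n+1) = ((n:ℝ)+2) ^ (1-u) := by
        simp only [hc]; push_cast
        rw [max_eq_right (by linarith), e1]
      have hn0 : (0:ℝ) ≤ (n:ℝ) := Nat.cast_nonneg n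
      have hB := auxB hu (show (1:ℝ) ≤ (n:ℝ)+1 by linarith)
      rw [e1] at hB
      have h2 : ((n:ℝ)+1) ^ (-u) ≤ 2 ^ u * ((n:ℝ)+2) ^ (-u) := by
        have ha : (2*((n:ℝ)+1)) ^ (-u) ≤ ((n:ℝ)+2) ^ (-u) :=
          Real.rpow_le_rpow_of_nonpos (by positivity) (by linarith) (by linarith)
        have hb : (2*((n:ℝ)+1)) ^ (-u) = 2^(-u) * ((n:ℝ)+1)^(-u) :=
          Real.mul_rpow (by norm_num) (by positivity)
        have h2u' : (2:ℝ)^u * 2^(-u) = 1 := by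
          rw [← Real.rpow_add (by norm_num)]; simp
        have h5 := mul_le_mul_of_nonneg_left ha h2u.le
        rw [hb, ← mul_assoc, h2u', one_mul] at h5
        exact h5
      rw [hcn, hcn1]
      have h4 : 2^u * (((n:ℝ)+2) ^ (-u)) ≤ K * (((n:ℝ)+1) ^ (1-u) - ((n:ℝ)+2) ^ (1-u)) := by
        rw [hK, div_mul_eq_mul_div, le_div_iff₀ hu1]
        nlinarith [hB, h2u]
      linarith
    · rw [if_neg h]; exact zero_le
  calc (∑' n : ℕ, if j ≤ n + 1 then ENNReal.ofReal (((n:ℝ) + 1) ^ (-u)) else 0)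
      ≤ ∑' n : ℕ, ENNReal.ofReal (K * (c n - c (n+1))) := ENNReal.tsum_le_tsum hterm
    _ ≤ ENNReal.ofReal (K * (j:ℝ) ^ (1 - u)) := by
        rw [ENNReal.tsum_eq_iSup_sum' _ Finset.exists_nat_subset_range]
        apply iSup_le; intro M
        rw [← ENNReal.ofReal_sum_of_nonneg (fun n _ =>
          mul_nonneg hK0 (by linarith [hcanti n]))]
        apply ENNReal.ofReal_le_ofReal
        rw [← Finset.mul_sum, Finset.sum_range_sub' c]
        have hc0 : c 0 = (j:ℝ) ^ (1-u) := by
          simp only [hc, Nat.cast_zero, zero_add]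
          rw [max_eq_left (by exact_mod_cast hj)]
        rw [hc0]
        nlinarith [hcnonneg M]

open ENNReal in
lemma auxJ {p : ℝ} (hp : 1 ≤ p) (s : Finset ℕ) (w A : ℕ → ℝ≥0∞)
    (hw0 : ∀ j ∈ s, w j ≠ 0) (hwt : ∀ j ∈ s, w j ≠ ∞)
    (hΛ0 : ∑ j ∈ s, w j ≠ 0) (hΛt : ∑ j ∈ s, w j ≠ ∞) :
    (∑ j ∈ s, A j) ^ p
      ≤ (∑ j ∈ s, w j) ^ (p-1) * ∑ j ∈ s, (w j) ^ (1-p) * A j ^ p := by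
  set Λ : ℝ≥0∞ := ∑ j ∈ s, w j with hΛ
  have hp0 : (0:ℝ) ≤ p := by linarith
  have hw' : ∑ j ∈ s, w j / Λ = 1 := by
    simp_rw [div_eq_mul_inv, ← Finset.sum_mul]
    exact ENNReal.mul_inv_cancel hΛ0 hΛt
  have key := ENNReal.rpow_arith_mean_le_arith_mean_rpow s (fun j => w j / Λ)
    (fun j => Λ / w j * A j) hw' hp
  have hL : ∀ j ∈ s, w j / Λ * (Λ / w j * A j) = A j := by
    intro j hj
    rw [div_eq_mul_inv, div_eq_mul_inv]
    calc w j * Λ⁻¹ * (Λ * (w j)⁻¹ * A j)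
        = (w j * (w j)⁻¹) * (Λ⁻¹ * Λ) * A j := by ring
      _ = A j := by
          rw [ENNReal.mul_inv_cancel (hw0 j hj) (hwt j hj),
            ENNReal.inv_mul_cancel hΛ0 hΛt, one_mul, one_mul]
  have hR : ∀ j ∈ s, w j / Λ * (Λ / w j * A j) ^ p
      = Λ ^ (p-1) * ((w j) ^ (1-p) * A j ^ p) := by
    intro j hj
    rw [div_eq_mul_inv, div_eq_mul_inv,
      ENNReal.mul_rpow_of_nonneg _ _ hp0, ENNReal.mul_rpow_of_nonneg _ _ hp0,
      ENNReal.inv_rpow]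
    have e1 : Λ⁻¹ * (Λ ^ p * ((w j ^ p)⁻¹) * A j ^ p) * w j
        = (Λ ^ p * Λ⁻¹) * ((w j * (w j ^ p)⁻¹) * A j ^ p) := by ring
    have e2 : Λ ^ p * Λ⁻¹ = Λ ^ (p-1) := by
      rw [← ENNReal.rpow_neg_one, ← ENNReal.rpow_add _ _ hΛ0 hΛt, sub_eq_add_neg]
    have e3 : w j * (w j ^ p)⁻¹ = w j ^ (1-p) := by
      calc w j * (w j ^ p)⁻¹ = w j ^ (1:ℝ) * w j ^ (-p) := by
            rw [ENNReal.rpow_one, ENNReal.rpow_neg]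
        _ = w j ^ (1-p) := by
            rw [← ENNReal.rpow_add _ _ (hw0 j hj) (hwt j hj), sub_eq_add_neg]
    calc w j * Λ⁻¹ * (Λ ^ p * (w j ^ p)⁻¹ * A j ^ p)
        = (Λ ^ p * Λ⁻¹) * ((w j * (w j ^ p)⁻¹) * A j ^ p) := by ring
      _ = Λ ^ (p-1) * (w j ^ (1-p) * A j ^ p) := by rw [e2, e3]
  rw [Finset.sum_congr rfl hL, Finset.sum_congr rfl hR, ← Finset.mul_sum] at key
  exact key

theorem stmt3 (p r : ℝ) (hp : 1 ≤ p) (hr : 0 < r) :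
    ∃ C : ℝ, 0 < C ∧ ∀ a : ℕ → ℝ, (∀ n, 0 ≤ a n) →
      (∑' n : ℕ, (∑ j ∈ Finset.Icc 1 (n + 1), ENNReal.ofReal (a j)) ^ p *
          ENNReal.ofReal (((n : ℝ) + 1) ^ (-r - 1))) ^ (1/p)
        ≤ ENNReal.ofReal C *
          (∑' n : ℕ, ENNReal.ofReal (((n : ℝ) + 1) * a (n + 1)) ^ p *
            ENNReal.ofReal (((n : ℝ) + 1) ^ (-r - 1))) ^ (1/p) := by
  have hp0 : (0:ℝ) < p := lt_of_lt_of_le one_pos hp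
  set δ : ℝ := min 1 (r/p) with hδ
  have hδ0 : 0 < δ := lt_min one_pos (div_pos hr hp0)
  have hδ1 : δ ≤ 1 := min_le_left _ _
  have hδr : δ * (p-1) < r := by
    have h1 : δ ≤ r/p := min_le_right _ _
    have hrp : r/p * p = r := div_mul_cancel₀ r hp0.ne'
    nlinarith [div_pos hr hp0]
  set u : ℝ := r + 1 - δ * (p-1) with hu_def
  have hu : 1 < u := by rw [hu_def]; linarith
  set K : ℝ := 2 ^ u / (u - 1) with hK
  have hK0 : 0 < K := div_pos (Real.rpow_pos_of_pos (by norm_num) u) (by linarith)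
  set Cp : ℝ := δ ^ (1-p) * K with hCp
  have hCp0 : 0 < Cp := mul_pos (Real.rpow_pos_of_pos hδ0 _) hK0
  refine ⟨Cp ^ (1/p), Real.rpow_pos_of_pos hCp0 _, fun a ha => ?_⟩
  set A : ℕ → ℝ≥0∞ := fun j => ENNReal.ofReal (a j) with hA
  set e : ℝ := (1-δ) * (p-1) with he
  set G : ℕ → ℝ≥0∞ := fun j => ENNReal.ofReal ((j:ℝ) ^ e) * A j ^ p with hG
  set w : ℕ → ℝ≥0∞ := fun j => ENNReal.ofReal ((j:ℝ) ^ δ - ((j:ℝ) - 1) ^ δ) with hw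
  -- facts about w on Icc 1 N
  have hwposR : ∀ j : ℕ, 1 ≤ j → 0 < (j:ℝ) ^ δ - ((j:ℝ) - 1) ^ δ := by
    intro j hj
    have hj1 : (1:ℝ) ≤ (j:ℝ) := by exact_mod_cast hj
    have := auxA hδ0 hδ1 hj1
    nlinarith [Real.rpow_pos_of_pos (lt_of_lt_of_le one_pos hj1) (δ-1), hδ0]
  -- step 1: pointwise (per n) bound
  have step1 : ∀ n : ℕ,
      (∑ j ∈ Finset.Icc 1 (n+1), A j) ^ p * ENNReal.ofReal (((n:ℝ) + 1) ^ (-r - 1))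
        ≤ ENNReal.ofReal (δ ^ (1-p)) *
          (ENNReal.ofReal (((n:ℝ)+1) ^ (-u)) * ∑ j ∈ Finset.Icc 1 (n+1), G j) := by
    intro n
    have hN1 : (1:ℝ) ≤ (n:ℝ) + 1 := by have := Nat.cast_nonneg (α := ℝ) n; linarith
    have hNpos : (0:ℝ) < (n:ℝ) + 1 := by positivity
    have hw0 : ∀ j ∈ Finset.Icc 1 (n+1), w j ≠ 0 := by
      intro j hj
      have hj1 : 1 ≤ j := (Finset.mem_Icc.mp hj).1
      simp only [hw, ne_eq, ENNReal.ofReal_eq_zero, not_le]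
      exact hwposR j hj1
    have hwt : ∀ j ∈ Finset.Icc 1 (n+1), w j ≠ ∞ := fun j _ => ENNReal.ofReal_ne_top
    have hsumw : ∑ j ∈ Finset.Icc 1 (n+1), w j = ENNReal.ofReal (((n:ℝ)+1) ^ δ) := by
      rw [hw, ← ENNReal.ofReal_sum_of_nonneg (fun j hj => by
        exact (hwposR j (Finset.mem_Icc.mp hj).1).le), auxD hδ0 (n+1)]
      norm_num
    have hΛ0 : ∑ j ∈ Finset.Icc 1 (n+1), w j ≠ 0 := by
      rw [hsumw]
      simp only [ne_eq, ENNReal.ofReal_eq_zero, not_le]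
      exact Real.rpow_pos_of_pos hNpos δ
    have hΛt : ∑ j ∈ Finset.Icc 1 (n+1), w j ≠ ∞ := by rw [hsumw]; exact ENNReal.ofReal_ne_top
    have hJ := auxJ hp (Finset.Icc 1 (n+1)) w A hw0 hwt hΛ0 hΛt
    rw [hsumw] at hJ
    -- bound (w j)^(1-p) ≤ ofReal(δ^(1-p)) * ofReal(j^e)
    have hwb : ∀ j ∈ Finset.Icc 1 (n+1),
        (w j) ^ (1-p) * A j ^ p ≤ ENNReal.ofReal (δ ^ (1-p)) * G j := by
      intro j hj
      have hj1 : 1 ≤ j := (Finset.mem_Icc.mp hj).1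
      have hj1R : (1:ℝ) ≤ (j:ℝ) := by exact_mod_cast hj1
      have hjpos : (0:ℝ) < (j:ℝ) := lt_of_lt_of_le one_pos hj1R
      have hlow : ENNReal.ofReal (δ * (j:ℝ) ^ (δ-1)) ≤ w j :=
        ENNReal.ofReal_le_ofReal (auxA hδ0 hδ1 hj1R)
      have hmono : (w j) ^ (1-p) ≤ ENNReal.ofReal (δ * (j:ℝ) ^ (δ-1)) ^ (1-p) := by
        have h1 : (w j) ^ (1-p) = ((w j) ^ (p-1))⁻¹ := by
          rw [← ENNReal.rpow_neg]; norm_num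
        have h2 : (ENNReal.ofReal (δ * (j:ℝ) ^ (δ-1))) ^ (1-p)
            = ((ENNReal.ofReal (δ * (j:ℝ) ^ (δ-1))) ^ (p-1))⁻¹ := by
          rw [← ENNReal.rpow_neg]; norm_num
        rw [h1, h2]
        exact ENNReal.inv_le_inv.mpr (ENNReal.rpow_le_rpow hlow (by linarith))
      have heq : (ENNReal.ofReal (δ * (j:ℝ) ^ (δ-1))) ^ (1-p)
          = ENNReal.ofReal (δ ^ (1-p)) * ENNReal.ofReal ((j:ℝ) ^ e) := by
        have hpos : (0:ℝ) < δ * (j:ℝ) ^ (δ-1) :=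
          mul_pos hδ0 (Real.rpow_pos_of_pos hjpos _)
        rw [ENNReal.ofReal_rpow_of_pos hpos,
          Real.mul_rpow hδ0.le (Real.rpow_nonneg hjpos.le _),
          ← Real.rpow_mul hjpos.le, ENNReal.ofReal_mul (Real.rpow_nonneg hδ0.le _)]
        congr 2
        rw [he]; ring
      calc (w j) ^ (1-p) * A j ^ p
          ≤ (ENNReal.ofReal (δ * (j:ℝ) ^ (δ-1))) ^ (1-p) * A j ^ p :=
            mul_le_mul_left hmono _
        _ = ENNReal.ofReal (δ ^ (1-p)) * G j := by rw [heq, hG]; ring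
    have hsum2 : ∑ j ∈ Finset.Icc 1 (n+1), (w j) ^ (1-p) * A j ^ p
        ≤ ENNReal.ofReal (δ ^ (1-p)) * ∑ j ∈ Finset.Icc 1 (n+1), G j := by
      rw [Finset.mul_sum]
      exact Finset.sum_le_sum hwb
    have hcomb : ENNReal.ofReal (((n:ℝ)+1) ^ δ) ^ (p-1) * ENNReal.ofReal (((n:ℝ)+1) ^ (-r-1))
        = ENNReal.ofReal (((n:ℝ)+1) ^ (-u)) := by
      rw [ENNReal.ofReal_rpow_of_pos (Real.rpow_pos_of_pos hNpos δ),
        ← Real.rpow_mul hNpos.le,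
        ← ENNReal.ofReal_mul (Real.rpow_nonneg hNpos.le _),
        ← Real.rpow_add hNpos]
      congr 1
      rw [hu_def]; ring
    calc (∑ j ∈ Finset.Icc 1 (n+1), A j) ^ p * ENNReal.ofReal (((n:ℝ) + 1) ^ (-r - 1))
        ≤ (ENNReal.ofReal (((n:ℝ)+1) ^ δ) ^ (p-1) *
            ∑ j ∈ Finset.Icc 1 (n+1), (w j) ^ (1-p) * A j ^ p) *
            ENNReal.ofReal (((n:ℝ) + 1) ^ (-r - 1)) := mul_le_mul_left hJ _
      _ = (ENNReal.ofReal (((n:ℝ)+1) ^ δ) ^ (p-1) * ENNReal.ofReal (((n:ℝ)+1) ^ (-r-1))) *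
            ∑ j ∈ Finset.Icc 1 (n+1), (w j) ^ (1-p) * A j ^ p := by ring
      _ = ENNReal.ofReal (((n:ℝ)+1) ^ (-u)) *
            ∑ j ∈ Finset.Icc 1 (n+1), (w j) ^ (1-p) * A j ^ p := by rw [hcomb]
      _ ≤ ENNReal.ofReal (((n:ℝ)+1) ^ (-u)) *
            (ENNReal.ofReal (δ ^ (1-p)) * ∑ j ∈ Finset.Icc 1 (n+1), G j) :=
          mul_le_mul_right hsum2 _
      _ = ENNReal.ofReal (δ ^ (1-p)) *
            (ENNReal.ofReal (((n:ℝ)+1) ^ (-u)) * ∑ j ∈ Finset.Icc 1 (n+1), G j) := by ring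
  -- remaining part
  set c : ℕ → ℝ≥0∞ := fun n => ENNReal.ofReal (((n:ℝ)+1) ^ (-u)) with hc
  set R : ℝ≥0∞ := ∑' n : ℕ, ENNReal.ofReal (((n:ℝ)+1) * a (n+1)) ^ p *
      ENNReal.ofReal (((n:ℝ)+1) ^ (-r-1)) with hR
  -- swap order of summation
  have h1 : ∀ n : ℕ, c n * ∑ j ∈ Finset.Icc 1 (n+1), G j
      = ∑' j : ℕ, (if 1 ≤ j ∧ j ≤ n+1 then c n * G j else 0) := by
    intro n
    calc c n * ∑ j ∈ Finset.Icc 1 (n+1), G j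
        = ∑ j ∈ Finset.Icc 1 (n+1), c n * G j := Finset.mul_sum _ _ _
      _ = ∑ j ∈ Finset.Icc 1 (n+1), (if 1 ≤ j ∧ j ≤ n+1 then c n * G j else 0) :=
          Finset.sum_congr rfl (fun j hj => (if_pos (Finset.mem_Icc.mp hj)).symm)
      _ = ∑' j : ℕ, (if 1 ≤ j ∧ j ≤ n+1 then c n * G j else 0) :=
          (tsum_eq_sum (fun j hj => if_neg (by simpa [Finset.mem_Icc] using hj))).symm
  have h2 : ∀ j : ℕ, (∑' n : ℕ, if 1 ≤ j ∧ j ≤ n+1 then c n * G j else 0)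
      ≤ (if 1 ≤ j then ENNReal.ofReal (K * (j:ℝ) ^ (1-u)) * G j else 0) := by
    intro j
    by_cases hj : 1 ≤ j
    · rw [if_pos hj]
      have hite : ∀ n : ℕ, (if 1 ≤ j ∧ j ≤ n+1 then c n * G j else 0)
          = (if j ≤ n+1 then c n else 0) * G j := by
        intro n; by_cases h : j ≤ n+1 <;> simp [hj, h]
      rw [tsum_congr hite, ENNReal.tsum_mul_right]
      exact mul_le_mul_left (auxC hu hj) _
    · have : ∀ n : ℕ, (if 1 ≤ j ∧ j ≤ n+1 then c n * G j else 0) = 0 := by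
        intro n; rw [if_neg]; tauto
      rw [tsum_congr this, tsum_zero, if_neg hj]
  have hswap : (∑' n : ℕ, c n * ∑ j ∈ Finset.Icc 1 (n+1), G j)
      ≤ ∑' j : ℕ, (if 1 ≤ j then ENNReal.ofReal (K * (j:ℝ) ^ (1-u)) * G j else 0) := by
    rw [tsum_congr h1, ENNReal.tsum_comm]
    exact ENNReal.tsum_le_tsum h2
  -- identify the shifted sum with K * R
  have hident : (∑' j : ℕ, (if 1 ≤ j then ENNReal.ofReal (K * (j:ℝ) ^ (1-u)) * G j else 0))
      = ENNReal.ofReal K * R := by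
    rw [tsum_eq_zero_add' ENNReal.summable]
    simp only [if_neg (by norm_num : ¬ (1 ≤ 0)), zero_add]
    have hterm : ∀ m : ℕ, (if 1 ≤ m+1 then ENNReal.ofReal (K * ((m+1:ℕ):ℝ) ^ (1-u)) * G (m+1) else 0)
        = ENNReal.ofReal K * (ENNReal.ofReal (((m:ℝ)+1) * a (m+1)) ^ p *
            ENNReal.ofReal (((m:ℝ)+1) ^ (-r-1))) := by
      intro m
      rw [if_pos (Nat.le_add_left 1 m)]
      have hx : (0:ℝ) < (m:ℝ) + 1 := by positivity
      have hcast : ((m+1:ℕ):ℝ) = (m:ℝ) + 1 := by push_cast; ring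
      have hG1 : G (m+1) = ENNReal.ofReal (((m:ℝ)+1) ^ e) * A (m+1) ^ p := by
        rw [hG]; simp only [hcast]
      have hRt : ENNReal.ofReal (((m:ℝ)+1) * a (m+1)) ^ p
          = ENNReal.ofReal (((m:ℝ)+1) ^ p) * A (m+1) ^ p := by
        rw [ENNReal.ofReal_mul hx.le, ENNReal.mul_rpow_of_nonneg _ _ hp0.le,
          ENNReal.ofReal_rpow_of_pos hx]
      rw [hG1, hRt, hcast]
      rw [ENNReal.ofReal_mul hK0.le]
      have e1 : ENNReal.ofReal (((m:ℝ)+1) ^ (1-u)) * ENNReal.ofReal (((m:ℝ)+1) ^ e)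
          = ENNReal.ofReal (((m:ℝ)+1) ^ (p-r-1)) := by
        rw [← ENNReal.ofReal_mul (Real.rpow_nonneg hx.le _), ← Real.rpow_add hx]
        congr 1
        rw [hu_def, he]; ring
      have e2 : ENNReal.ofReal (((m:ℝ)+1) ^ p) * ENNReal.ofReal (((m:ℝ)+1) ^ (-r-1))
          = ENNReal.ofReal (((m:ℝ)+1) ^ (p-r-1)) := by
        rw [← ENNReal.ofReal_mul (Real.rpow_nonneg hx.le _), ← Real.rpow_add hx]
        congr 1
        ring
      calc ENNReal.ofReal K * ENNReal.ofReal (((m:ℝ)+1) ^ (1-u)) *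
            (ENNReal.ofReal (((m:ℝ)+1) ^ e) * A (m+1) ^ p)
          = ENNReal.ofReal K * ((ENNReal.ofReal (((m:ℝ)+1) ^ (1-u)) *
              ENNReal.ofReal (((m:ℝ)+1) ^ e)) * A (m+1) ^ p) := by ring
        _ = ENNReal.ofReal K * (ENNReal.ofReal (((m:ℝ)+1) ^ (p-r-1)) * A (m+1) ^ p) := by rw [e1]
        _ = ENNReal.ofReal K * (ENNReal.ofReal (((m:ℝ)+1) ^ p) *
              ENNReal.ofReal (((m:ℝ)+1) ^ (-r-1)) * A (m+1) ^ p) := by rw [e2]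
        _ = ENNReal.ofReal K * (ENNReal.ofReal (((m:ℝ)+1) ^ p) * A (m+1) ^ p *
              ENNReal.ofReal (((m:ℝ)+1) ^ (-r-1))) := by ring
    rw [tsum_congr hterm, ENNReal.tsum_mul_left, hR]
  -- put everything together
  have main : (∑' n : ℕ, (∑ j ∈ Finset.Icc 1 (n + 1), ENNReal.ofReal (a j)) ^ p *
        ENNReal.ofReal (((n : ℝ) + 1) ^ (-r - 1)))
      ≤ ENNReal.ofReal Cp * R := by
    calc (∑' n : ℕ, (∑ j ∈ Finset.Icc 1 (n + 1), ENNReal.ofReal (a j)) ^ p *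
          ENNReal.ofReal (((n : ℝ) + 1) ^ (-r - 1)))
        = ∑' n : ℕ, (∑ j ∈ Finset.Icc 1 (n + 1), A j) ^ p *
          ENNReal.ofReal (((n : ℝ) + 1) ^ (-r - 1)) := rfl
      _ ≤ ∑' n : ℕ, ENNReal.ofReal (δ ^ (1-p)) *
            (c n * ∑ j ∈ Finset.Icc 1 (n+1), G j) := ENNReal.tsum_le_tsum step1
      _ = ENNReal.ofReal (δ ^ (1-p)) * ∑' n : ℕ, c n * ∑ j ∈ Finset.Icc 1 (n+1), G j :=
            ENNReal.tsum_mul_left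
      _ ≤ ENNReal.ofReal (δ ^ (1-p)) * (ENNReal.ofReal K * R) := by
            rw [← hident]
            exact mul_le_mul_right hswap _
      _ = ENNReal.ofReal Cp * R := by
            rw [hCp, ENNReal.ofReal_mul (Real.rpow_nonneg hδ0.le _), mul_assoc]
  have h1p : (0:ℝ) ≤ 1/p := by positivity
  calc (∑' n : ℕ, (∑ j ∈ Finset.Icc 1 (n + 1), ENNReal.ofReal (a j)) ^ p *
        ENNReal.ofReal (((n : ℝ) + 1) ^ (-r - 1))) ^ (1/p)
      ≤ (ENNReal.ofReal Cp * R) ^ (1/p) := ENNReal.rpow_le_rpow main h1p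
    _ = ENNReal.ofReal Cp ^ (1/p) * R ^ (1/p) := ENNReal.mul_rpow_of_nonneg _ _ h1p
    _ = ENNReal.ofReal (Cp ^ (1/p)) * R ^ (1/p) := by
        rw [ENNReal.ofReal_rpow_of_pos hCp0]
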